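/- arXiv:2407.09264 — 2 statements merged into one kernel-verified Lean document; each statement's English description precedes it below -/
import Mathlib

section
/- Let G be a group of type FP_m with center Z, and let χ : G → ℝ be a character that does not vanish on Z (i.e. χ(z) ≠ 0 for some z ∈ Z). Then χ ∈ Σ^m(G;ℤ). -/
open Finsupp

variable {G : Type*} [Group G]

/-- Word length with respect to a generating set `X`. -/
noncomputable def wordLength (X : Finset G) (g : G) : ℕ :=
  sInf {n : ℕ | ∃ w : List G, w.length = n ∧ (∀ x ∈ w, x ∈ X ∨ x⁻¹ ∈ X) ∧ w.prod = g}

/-- The left-invariant word metric `d(g,h) = l(g⁻¹h)`. -/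
noncomputable def wordDist (X : Finset G) (g h : G) : ℕ :=
  wordLength X (g⁻¹ * h)

/-- `c` is a chain in `C_q^k(S)`: its support consists of `(q+1)`-tuples of elements of `S`
that are pairwise at distance at most `k`. -/
def VRChain (X : Finset G) (S : Set G) (q k : ℕ) (c : (Fin (q + 1) → G) →₀ ℤ) : Prop :=
  ∀ σ ∈ c.support, (∀ i, σ i ∈ S) ∧ ∀ i j, wordDist X (σ i) (σ j) ≤ k

/-- The simplicial boundary map `∂_{q+1} : ℤ[G^{q+2}] → ℤ[G^{q+1}]`. -/
noncomputable def bnd (q : ℕ) :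
    ((Fin (q + 2) → G) →₀ ℤ) →ₗ[ℤ] ((Fin (q + 1) → G) →₀ ℤ) :=
  Finsupp.lift _ ℤ _
    (fun σ => ∑ i : Fin (q + 2), ((-1 : ℤ) ^ (i : ℕ)) • Finsupp.single (σ ∘ i.succAbove) (1 : ℤ))

/-- The augmentation `ε : ℤ[G] → ℤ` sending every vertex to `1`. -/
noncomputable def aug : ((Fin 1 → G) →₀ ℤ) →ₗ[ℤ] ℤ :=
  Finsupp.lift ℤ ℤ (Fin 1 → G) (fun _ => (1 : ℤ))

/-- Reduced `q`-cycles at scale `k` on `S` bound at scale `l` on `S`. -/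
def BoundsAt (X : Finset G) (S : Set G) : ℕ → ℕ → ℕ → Prop
  | 0, k, l => ∀ z : (Fin 1 → G) →₀ ℤ, VRChain X S 0 k z → aug z = 0 →
      ∃ c : (Fin 2 → G) →₀ ℤ, VRChain X S 1 l c ∧ bnd 0 c = z
  | (q + 1), k, l => ∀ z : (Fin (q + 2) → G) →₀ ℤ, VRChain X S (q + 1) k z → bnd q z = 0 →
      ∃ c : (Fin (q + 3) → G) →₀ ℤ, VRChain X S (q + 2) l c ∧ bnd (q + 1) c = z

/-- `S ⊆ G` is of type `FP_m`. -/
def TypeFP (X : Finset G) (S : Set G) (m : ℕ) : Prop :=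
  ∀ q < m, ∀ k : ℕ, ∃ l ≥ k, BoundsAt X S q k l

/-- A character on `G` is a homomorphism to the additive reals. -/
def IsCharacter (χ : G → ℝ) : Prop :=
  ∀ g h : G, χ (g * h) = χ g + χ h

/-- Simultaneous left translation on chains, making `ℤ[G^{q+1}]` a `ℤG`-module. -/
noncomputable def lTranslate (g : G) (q : ℕ) :
    ((Fin (q + 1) → G) →₀ ℤ) →ₗ[ℤ] ((Fin (q + 1) → G) →₀ ℤ) :=
  Finsupp.lmapDomain ℤ ℤ (fun σ i => g * σ i)

/-- A chain endomorphism of `ℤG`-complexes on `(C_q^k(G))_{q=0,…,m}` extending the identity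
on `ℤ`: each `φ q` maps scale-`k` chains to scale-`k` chains, is `G`-equivariant,
satisfies `ε ∘ φ₀ = ε` and commutes with the boundary maps. -/
def IsChainEndo (X : Finset G) (k m : ℕ)
    (φ : ∀ q : ℕ, ((Fin (q + 1) → G) →₀ ℤ) →ₗ[ℤ] ((Fin (q + 1) → G) →₀ ℤ)) : Prop :=
  (∀ q ≤ m, ∀ c, VRChain X Set.univ q k c → VRChain X Set.univ q k (φ q c)) ∧
  (∀ q ≤ m, ∀ (g : G) (c), VRChain X Set.univ q k c →
    φ q (lTranslate g q c) = lTranslate g q (φ q c)) ∧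
  (∀ c : (Fin 1 → G) →₀ ℤ, VRChain X Set.univ 0 k c → aug (φ 0 c) = aug c) ∧
  (∀ q : ℕ, q + 1 ≤ m → ∀ c : (Fin (q + 2) → G) →₀ ℤ, VRChain X Set.univ (q + 1) k c →
    bnd q (φ (q + 1) c) = φ q (bnd q c))

/-- The valuation of a simplex: `v(σ) = min_i χ(g_i)` (with values in `EReal`). -/
noncomputable def vsimp (χ : G → ℝ) {q : ℕ} (σ : Fin (q + 1) → G) : EReal :=
  ⨅ i, (χ (σ i) : EReal)

/-- The valuation of a chain: the minimum of the valuations of the simplices in its support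
(`⊤` for the zero chain). -/
noncomputable def vchain (χ : G → ℝ) {q : ℕ} (c : (Fin (q + 1) → G) →₀ ℤ) : EReal :=
  ⨅ σ ∈ c.support, vsimp χ σ


section Aux

variable {G : Type*} [Group G]

/-- Every element has a word representation when `X` generates. -/
lemma exists_word (X : Finset G) (hX : Subgroup.closure (X : Set G) = ⊤) (g : G) :
    ∃ w : List G, (∀ x ∈ w, x ∈ X ∨ x⁻¹ ∈ X) ∧ w.prod = g := by
  let T : Subgroup G :=
  { carrier := {g | ∃ w : List G, (∀ x ∈ w, x ∈ X ∨ x⁻¹ ∈ X) ∧ w.prod = g}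
    one_mem' := ⟨[], by simp, by simp⟩
    mul_mem' := by
      rintro a b ⟨wa, hwa, rfl⟩ ⟨wb, hwb, rfl⟩
      refine ⟨wa ++ wb, ?_, by simp⟩
      intro x hx
      rcases List.mem_append.1 hx with h | h
      exacts [hwa x h, hwb x h]
    inv_mem' := by
      rintro a ⟨w, hw, rfl⟩
      refine ⟨(w.map fun x => x⁻¹).reverse, ?_, (List.prod_inv_reverse w).symm⟩
      intro x hx
      simp only [List.mem_reverse, List.mem_map] at hx
      obtain ⟨y, hy, rfl⟩ := hx
      rcases hw y hy with h | h
      · exact Or.inr (by simpa using h)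
      · exact Or.inl h }
  have : g ∈ T := by
    have : Subgroup.closure (X : Set G) ≤ T :=
      (Subgroup.closure_le T).2 (fun x hx => ⟨[x], by simp [Finset.mem_coe.1 hx], by simp⟩)
    exact this (hX ▸ Subgroup.mem_top g)
  exact this

lemma wordLength_le (X : Finset G) {g : G} (w : List G)
    (hw : ∀ x ∈ w, x ∈ X ∨ x⁻¹ ∈ X) (hp : w.prod = g) :
    wordLength X g ≤ w.length :=
  Nat.sInf_le ⟨w, rfl, hw, hp⟩

lemma wordLength_spec (X : Finset G) (hX : Subgroup.closure (X : Set G) = ⊤) (g : G) :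
    ∃ w : List G, w.length = wordLength X g ∧ (∀ x ∈ w, x ∈ X ∨ x⁻¹ ∈ X) ∧ w.prod = g := by
  have hne : {n : ℕ | ∃ w : List G, w.length = n ∧ (∀ x ∈ w, x ∈ X ∨ x⁻¹ ∈ X) ∧
      w.prod = g}.Nonempty := by
    obtain ⟨w, hw, hp⟩ := exists_word X hX g
    exact ⟨w.length, w, rfl, hw, hp⟩
  have := Nat.sInf_mem hne
  obtain ⟨w, hlen, hw, hp⟩ := this
  exact ⟨w, hlen, hw, hp⟩

lemma wordLength_mul_le (X : Finset G) (hX : Subgroup.closure (X : Set G) = ⊤) (a b : G) :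
    wordLength X (a * b) ≤ wordLength X a + wordLength X b := by
  obtain ⟨wa, hla, hwa, hpa⟩ := wordLength_spec X hX a
  obtain ⟨wb, hlb, hwb, hpb⟩ := wordLength_spec X hX b
  have := wordLength_le X (g := a * b) (wa ++ wb)
    (by intro x hx; rcases List.mem_append.1 hx with h | h; exacts [hwa x h, hwb x h])
    (by simp [hpa, hpb])
  simpa [hla, hlb] using this

lemma wordDist_left_invariant (X : Finset G) (g a b : G) :
    wordDist X (g * a) (g * b) = wordDist X a b := by
  simp only [wordDist]
  congr 1
  group

lemma wordDist_mul_right_le (X : Finset G) (hX : Subgroup.closure (X : Set G) = ⊤)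
    {t : G} (htc : ∀ g : G, t * g = g * t) (a b : G) :
    wordDist X a (t * b) ≤ wordLength X t + wordDist X a b := by
  have h1 : a⁻¹ * (t * b) = t * (a⁻¹ * b) := by
    rw [← mul_assoc, ← htc a⁻¹, mul_assoc]
  simp only [wordDist, h1]
  exact wordLength_mul_le X hX t (a⁻¹ * b)

lemma wordDist_mul_left_le (X : Finset G) (hX : Subgroup.closure (X : Set G) = ⊤)
    {t : G} (htc : ∀ g : G, t * g = g * t) (a b : G) :
    wordDist X (t * a) b ≤ wordLength X t⁻¹ + wordDist X a b := by
  have h2 : a⁻¹ * t⁻¹ = t⁻¹ * a⁻¹ := by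
    rw [← mul_inv_rev, ← mul_inv_rev, htc]
  have h1 : (t * a)⁻¹ * b = t⁻¹ * (a⁻¹ * b) := by
    rw [mul_inv_rev, h2, mul_assoc]
  simp only [wordDist, h1]
  exact wordLength_mul_le X hX t⁻¹ (a⁻¹ * b)

end Aux

section Prism

variable {G : Type*} [Group G]

/-- The `j`-th face of a simplex, with natural-number index. -/
def faceN (n : ℕ) (σ : Fin (n + 2) → G) (j : ℕ) : Fin (n + 1) → G :=
  fun r => if (r : ℕ) < j then σ (Fin.castSucc r) else σ r.succ

/-- The `i`-th prism simplex over `σ`: `(σ_0, …, σ_i, tσ_i, …, tσ_n)`. -/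
def prismN (t : G) (n : ℕ) (σ : Fin (n + 1) → G) (i : ℕ) : Fin (n + 2) → G :=
  fun r => if (r : ℕ) ≤ i then σ ⟨min (r : ℕ) n, by omega⟩
    else t * σ ⟨(r : ℕ) - 1, by have := r.2; omega⟩

lemma prismN_congr (t : G) (n : ℕ) (σ : Fin (n + 1) → G) {i i' : ℕ}
    (h : i = i') : prismN t n σ i = prismN t n σ i' := by rw [h]

/-- The prism operator `P : C_n → C_{n+1}`. -/
noncomputable def prism (t : G) (n : ℕ) :
    ((Fin (n + 1) → G) →₀ ℤ) →ₗ[ℤ] ((Fin (n + 2) → G) →₀ ℤ) :=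
  Finsupp.lift _ ℤ _
    (fun σ => ∑ i : Fin (n + 1), ((-1 : ℤ) ^ (i : ℕ)) • Finsupp.single (prismN t n σ i) 1)

lemma succAbove_coe {n : ℕ} (p : Fin (n + 1)) (j : Fin n) :
    ((p.succAbove j : Fin (n + 1)) : ℕ) = if (j : ℕ) < (p : ℕ) then (j : ℕ) else (j : ℕ) + 1 := by
  rw [Fin.succAbove]
  split_ifs with h1 h2 h2 <;> simp_all [Fin.lt_def] <;> omega

lemma comp_succAbove {n : ℕ} (σ : Fin (n + 2) → G) (j : Fin (n + 2)) :
    σ ∘ j.succAbove = faceN n σ (j : ℕ) := by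
  funext r
  simp only [Function.comp, faceN]
  split_ifs with h <;> (congr 1; apply Fin.ext; rw [succAbove_coe]; simp [h])

lemma bnd_single (q : ℕ) (σ : Fin (q + 2) → G) (b : ℤ) :
    bnd q (Finsupp.single σ b) =
      b • ∑ i ∈ Finset.range (q + 2), ((-1 : ℤ) ^ i) • Finsupp.single (faceN q σ i) 1 := by
  rw [bnd, Finsupp.lift_apply, Finsupp.sum_single_index (by simp)]
  congr 1
  rw [← Fin.sum_univ_eq_sum_range (fun i => ((-1 : ℤ) ^ i) • Finsupp.single (faceN q σ i) 1)]
  exact Finset.sum_congr rfl fun i _ => by rw [comp_succAbove]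

lemma prism_single (t : G) (n : ℕ) (σ : Fin (n + 1) → G) (b : ℤ) :
    prism t n (Finsupp.single σ b) =
      b • ∑ i ∈ Finset.range (n + 1), ((-1 : ℤ) ^ i) • Finsupp.single (prismN t n σ i) 1 := by
  rw [prism, Finsupp.lift_apply, Finsupp.sum_single_index (by simp)]
  congr 1
  exact Fin.sum_univ_eq_sum_range
    (fun i => ((-1 : ℤ) ^ i) • Finsupp.single (prismN t n σ i) (1 : ℤ)) (n + 1)

lemma lTranslate_single (g : G) (q : ℕ) (σ : Fin (q + 1) → G) (b : ℤ) :
    lTranslate g q (Finsupp.single σ b) = Finsupp.single (fun i => g * σ i) b := by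
  rw [lTranslate, Finsupp.lmapDomain_apply, Finsupp.mapDomain_single]

end Prism

section PrismFaces

variable {G : Type*} [Group G]

/-- Diagonal face `d_i P_i`. -/
lemma faceN_prismN_self (t : G) (q : ℕ) (σ : Fin (q + 2) → G) (i : ℕ) (hi : i ≤ q + 1) :
    faceN (q + 1) (prismN t (q + 1) σ i) i =
      fun j : Fin (q + 2) => if (j : ℕ) < i then σ j else t * σ j := by
  funext r
  have hr := r.2
  simp only [faceN, prismN, Fin.coe_castSucc, Fin.val_succ]
  split_ifs <;>
    first
      | (exfalso; omega)
      | (congr 1 <;> first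
          | (apply Fin.ext; first | omega | (simp; omega) | simp)
          | (congr 1 <;> (apply Fin.ext; first | omega | (simp; omega) | simp)))

/-- Diagonal face `d_{i+1} P_i`. -/
lemma faceN_prismN_self' (t : G) (q : ℕ) (σ : Fin (q + 2) → G) (i : ℕ) (hi : i ≤ q + 1) :
    faceN (q + 1) (prismN t (q + 1) σ i) (i + 1) =
      fun j : Fin (q + 2) => if (j : ℕ) < i + 1 then σ j else t * σ j := by
  funext r
  have hr := r.2
  simp only [faceN, prismN, Fin.coe_castSucc, Fin.val_succ]
  split_ifs <;>
    first
      | (exfalso; omega)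
      | (congr 1 <;> first
          | (apply Fin.ext; first | omega | (simp; omega) | simp)
          | (congr 1 <;> (apply Fin.ext; first | omega | (simp; omega) | simp)))

/-- `d_j P_{i+1} = P_i d_j` for `j ≤ i`. -/
lemma faceN_prismN_low (t : G) (q : ℕ) (σ : Fin (q + 2) → G) (j i : ℕ)
    (h1 : j ≤ i) (h2 : i ≤ q) :
    faceN (q + 1) (prismN t (q + 1) σ (i + 1)) j = prismN t q (faceN q σ j) i := by
  funext r
  have hr := r.2
  simp only [faceN, prismN, Fin.coe_castSucc, Fin.val_succ]
  split_ifs <;>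
    first
      | (exfalso; omega)
      | (congr 1 <;> first
          | (apply Fin.ext; first | omega | (simp; omega) | simp)
          | (congr 1 <;> (apply Fin.ext; first | omega | (simp; omega) | simp)))

/-- `d_{i2+1} P_i = P_i d_{i2}` for `i < i2`. -/
lemma faceN_prismN_high (t : G) (q : ℕ) (σ : Fin (q + 2) → G) (i i2 : ℕ)
    (h1 : i < i2) (h2 : i2 ≤ q + 1) :
    faceN (q + 1) (prismN t (q + 1) σ i) (i2 + 1) = prismN t q (faceN q σ i2) i := by
  funext r
  have hr := r.2
  simp only [faceN, prismN, Fin.coe_castSucc, Fin.val_succ]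
  split_ifs <;>
    first
      | (exfalso; omega)
      | (congr 1 <;> first
          | (apply Fin.ext; first | omega | (simp; omega) | simp)
          | (congr 1 <;> (apply Fin.ext; first | omega | (simp; omega) | simp)))

end PrismFaces

section MainIdentity

variable {G : Type*} [Group G]

private noncomputable def aT (t : G) (q : ℕ) (σ : Fin (q + 2) → G) (i j : ℕ) :
    (Fin (q + 2) → G) →₀ ℤ :=
  ((-1 : ℤ) ^ (i + j)) • Finsupp.single (faceN (q + 1) (prismN t (q + 1) σ i) j) 1

private noncomputable def bT (t : G) (q : ℕ) (σ : Fin (q + 2) → G) (i2 i : ℕ) :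
    (Fin (q + 2) → G) →₀ ℤ :=
  ((-1 : ℤ) ^ (i2 + i)) • Finsupp.single (prismN t q (faceN q σ i2) i) 1

private noncomputable def dT (t : G) (q : ℕ) (σ : Fin (q + 2) → G) (i : ℕ) :
    (Fin (q + 2) → G) →₀ ℤ :=
  Finsupp.single (fun j : Fin (q + 2) => if (j : ℕ) < i then σ j else t * σ j) 1

private lemma hdiag (t : G) (q : ℕ) (σ : Fin (q + 2) → G) (i : ℕ) (hi : i < q + 2) :
    aT t q σ i i + aT t q σ i (i + 1) = dT t q σ i - dT t q σ (i + 1) := by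
  have e1 := faceN_prismN_self t q σ i (by omega)
  have e2 := faceN_prismN_self' t q σ i (by omega)
  have s1 : ((-1 : ℤ)) ^ (i + i) = 1 := by
    rw [← two_mul, pow_mul]; norm_num
  have s2 : ((-1 : ℤ)) ^ (i + (i + 1)) = -1 := by
    have h : i + (i + 1) = 2 * i + 1 := by ring
    rw [h, pow_succ, pow_mul]; norm_num
  rw [aT, aT, dT, dT, e1, e2, s1, s2, one_smul, neg_one_smul, sub_eq_add_neg]

private lemma hlow (t : G) (q : ℕ) (σ : Fin (q + 2) → G) (i' j : ℕ)
    (h1 : j ≤ i') (h2 : i' ≤ q) :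
    aT t q σ (i' + 1) j = - bT t q σ j i' := by
  have e := faceN_prismN_low t q σ j i' h1 h2
  have s : ((-1 : ℤ)) ^ (i' + 1 + j) = -((-1 : ℤ) ^ (j + i')) := by
    have h : i' + 1 + j = (j + i') + 1 := by ring
    rw [h, pow_succ]; ring
  rw [aT, bT, e, s, neg_smul]

private lemma hhigh (t : G) (q : ℕ) (σ : Fin (q + 2) → G) (i i2 : ℕ)
    (h1 : i < i2) (h2 : i2 ≤ q + 1) :
    aT t q σ i (i2 + 1) = - bT t q σ i2 i := by
  have e := faceN_prismN_high t q σ i i2 h1 h2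
  have s : ((-1 : ℤ)) ^ (i + (i2 + 1)) = -((-1 : ℤ) ^ (i2 + i)) := by
    have h : i + (i2 + 1) = (i2 + i) + 1 := by ring
    rw [h, pow_succ]; ring
  rw [aT, bT, e, s, neg_smul]

private lemma hd0 (t : G) (q : ℕ) (σ : Fin (q + 2) → G) :
    dT t q σ 0 = lTranslate t (q + 1) (Finsupp.single σ 1) := by
  rw [dT, lTranslate_single]
  congr 1

private lemma hdtop (t : G) (q : ℕ) (σ : Fin (q + 2) → G) :
    dT t q σ (q + 2) = Finsupp.single σ 1 := by
  rw [dT]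
  congr 1
  funext j
  rw [if_pos j.2]

/-- The chain homotopy identity `∂ P + P ∂ = T - id` on a single simplex. -/
private lemma bnd_prism_single (t : G) (q : ℕ) (σ : Fin (q + 2) → G) :
    bnd (q + 1) (prism t (q + 1) (Finsupp.single σ 1)) +
      prism t q (bnd q (Finsupp.single σ 1)) =
    lTranslate t (q + 1) (Finsupp.single σ 1) - Finsupp.single σ 1 := by
  classical
  have h1 : bnd (q + 1) (prism t (q + 1) (Finsupp.single σ 1)) =
      ∑ i ∈ Finset.range (q + 2), ∑ j ∈ Finset.range (q + 3), aT t q σ i j := by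
    rw [prism_single, one_smul, map_sum]
    refine Finset.sum_congr rfl fun i _ => ?_
    rw [map_smul, bnd_single, one_smul, Finset.smul_sum]
    refine Finset.sum_congr rfl fun j _ => ?_
    rw [smul_smul, ← pow_add]
    rfl
  have h2 : prism t q (bnd q (Finsupp.single σ 1)) =
      ∑ i2 ∈ Finset.range (q + 2), ∑ i ∈ Finset.range (q + 1), bT t q σ i2 i := by
    rw [bnd_single, one_smul, map_sum]
    refine Finset.sum_congr rfl fun i2 _ => ?_
    rw [map_smul, prism_single, one_smul, Finset.smul_sum]
    refine Finset.sum_congr rfl fun i _ => ?_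
    rw [smul_smul, ← pow_add]
    rfl
  -- split the inner sum of the first double sum
  have hsplit : ∀ i ∈ Finset.range (q + 2),
      ∑ j ∈ Finset.range (q + 3), aT t q σ i j =
      (∑ j ∈ Finset.range i, aT t q σ i j) + (aT t q σ i i + aT t q σ i (i + 1)) +
        ∑ j ∈ Finset.Ico (i + 2) (q + 3), aT t q σ i j := by
    intro i hi
    simp only [Finset.mem_range] at hi
    have c1 : ∑ j ∈ Finset.Ico 0 i, aT t q σ i j + ∑ j ∈ Finset.Ico i (q + 3), aT t q σ i j
        = ∑ j ∈ Finset.Ico 0 (q + 3), aT t q σ i j :=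
      Finset.sum_Ico_consecutive _ (by omega) (by omega)
    have c2 : ∑ j ∈ Finset.Ico i (i + 2), aT t q σ i j
        + ∑ j ∈ Finset.Ico (i + 2) (q + 3), aT t q σ i j
        = ∑ j ∈ Finset.Ico i (q + 3), aT t q σ i j :=
      Finset.sum_Ico_consecutive _ (by omega) (by omega)
    have c3 : ∑ j ∈ Finset.Ico i (i + 2), aT t q σ i j = aT t q σ i i + aT t q σ i (i + 1) := by
      rw [show i + 2 = (i + 1) + 1 from rfl, Finset.sum_Ico_succ_top (by omega),
        Finset.sum_Ico_succ_top (by omega), Finset.Ico_self, Finset.sum_empty, zero_add]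
    rw [Finset.range_eq_Ico, ← c1, ← c2, c3, ← Finset.range_eq_Ico]
    abel
  have hfirst : ∑ i ∈ Finset.range (q + 2), ∑ j ∈ Finset.range (q + 3), aT t q σ i j =
      (∑ i ∈ Finset.range (q + 2), ∑ j ∈ Finset.range i, aT t q σ i j)
      + (∑ i ∈ Finset.range (q + 2), (aT t q σ i i + aT t q σ i (i + 1)))
      + ∑ i ∈ Finset.range (q + 2), ∑ j ∈ Finset.Ico (i + 2) (q + 3), aT t q σ i j := by
    rw [← Finset.sum_add_distrib, ← Finset.sum_add_distrib]
    exact Finset.sum_congr rfl hsplit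
  -- the diagonal part telescopes
  have hdiagsum : ∑ i ∈ Finset.range (q + 2), (aT t q σ i i + aT t q σ i (i + 1)) =
      lTranslate t (q + 1) (Finsupp.single σ 1) - Finsupp.single σ 1 := by
    have : ∑ i ∈ Finset.range (q + 2), (aT t q σ i i + aT t q σ i (i + 1)) =
        ∑ i ∈ Finset.range (q + 2), (dT t q σ i - dT t q σ (i + 1)) := by
      refine Finset.sum_congr rfl fun i hi => ?_
      exact hdiag t q σ i (Finset.mem_range.1 hi)
    rw [this, Finset.sum_range_sub' (dT t q σ), hd0, hdtop]
  -- the lower off-diagonal part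
  have hT1 : ∑ i ∈ Finset.range (q + 2), ∑ j ∈ Finset.range i, aT t q σ i j =
      - ∑ i' ∈ Finset.range (q + 1), ∑ j ∈ Finset.range (i' + 1), bT t q σ j i' := by
    rw [Finset.sum_range_succ']
    simp only [Finset.range_zero, Finset.sum_empty, add_zero]
    rw [← Finset.sum_neg_distrib]
    refine Finset.sum_congr rfl fun i' hi' => ?_
    rw [← Finset.sum_neg_distrib]
    refine Finset.sum_congr rfl fun j hj => ?_
    simp only [Finset.mem_range] at hi' hj
    rw [hlow t q σ i' j (by omega) (by omega)]
  -- the upper off-diagonal part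
  have hT2 : ∑ i ∈ Finset.range (q + 2), ∑ j ∈ Finset.Ico (i + 2) (q + 3), aT t q σ i j =
      - ∑ i ∈ Finset.range (q + 2), ∑ i2 ∈ Finset.Ico (i + 1) (q + 2), bT t q σ i2 i := by
    rw [← Finset.sum_neg_distrib]
    refine Finset.sum_congr rfl fun i hi => ?_
    simp only [Finset.mem_range] at hi
    rw [Finset.sum_Ico_eq_sum_range, Finset.sum_Ico_eq_sum_range, ← Finset.sum_neg_distrib]
    have hc : q + 3 - (i + 2) = q + 2 - (i + 1) := by omega
    rw [hc]
    refine Finset.sum_congr rfl fun k hk => ?_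
    simp only [Finset.mem_range] at hk
    have e1 : i + 2 + k = (i + 1 + k) + 1 := by omega
    rw [e1, hhigh t q σ i (i + 1 + k) (by omega) (by omega)]
  -- recombining the two off-diagonal parts gives the second double sum
  have hS2 : ∑ i2 ∈ Finset.range (q + 2), ∑ i ∈ Finset.range (q + 1), bT t q σ i2 i =
      (∑ i' ∈ Finset.range (q + 1), ∑ j ∈ Finset.range (i' + 1), bT t q σ j i')
      + ∑ i ∈ Finset.range (q + 2), ∑ i2 ∈ Finset.Ico (i + 1) (q + 2), bT t q σ i2 i := by
    have hdrop : ∑ i ∈ Finset.range (q + 2), ∑ i2 ∈ Finset.Ico (i + 1) (q + 2), bT t q σ i2 i =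
        ∑ i ∈ Finset.range (q + 1), ∑ i2 ∈ Finset.Ico (i + 1) (q + 2), bT t q σ i2 i := by
      rw [Finset.sum_range_succ, Finset.Ico_self, Finset.sum_empty, add_zero]
    rw [hdrop, ← Finset.sum_add_distrib, Finset.sum_comm]
    refine Finset.sum_congr rfl fun i hi => ?_
    simp only [Finset.mem_range] at hi
    rw [Finset.range_eq_Ico, Finset.range_eq_Ico, Finset.sum_Ico_consecutive _ (by omega) (by omega),
      ← Finset.range_eq_Ico]
  rw [h1, h2, hfirst, hdiagsum, hT1, hT2, hS2]
  abel

end MainIdentity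

section Homotopy

variable {G : Type*} [Group G]

lemma lTranslate_comp (g h : G) (q : ℕ) (z : (Fin (q + 1) → G) →₀ ℤ) :
    lTranslate g q (lTranslate h q z) = lTranslate (g * h) q z := by
  induction z using Finsupp.induction_linear with
  | zero => simp
  | add f f' hf hf' => simp only [map_add, hf, hf']
  | single σ b =>
    rw [lTranslate_single, lTranslate_single, lTranslate_single]
    congr 1
    funext i
    rw [mul_assoc]

lemma lTranslate_one (q : ℕ) (z : (Fin (q + 1) → G) →₀ ℤ) :
    lTranslate (1 : G) q z = z := by
  induction z using Finsupp.induction_linear with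
  | zero => simp
  | add f f' hf hf' => simp only [map_add, hf, hf']
  | single σ b => simp [lTranslate_single]

lemma faceN_translate (g : G) (q : ℕ) (σ : Fin (q + 2) → G) (j : ℕ) :
    faceN q (fun i => g * σ i) j = fun r => g * faceN q σ j r := by
  funext r
  simp only [faceN]
  split_ifs <;> rfl

lemma bnd_lTranslate (g : G) (q : ℕ) (z : (Fin (q + 2) → G) →₀ ℤ) :
    bnd q (lTranslate g (q + 1) z) = lTranslate g q (bnd q z) := by
  induction z using Finsupp.induction_linear with
  | zero => simp
  | add f f' hf hf' => simp only [map_add, hf, hf']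
  | single σ b =>
    rw [lTranslate_single, bnd_single, bnd_single, map_smul, map_sum]
    congr 1
    refine Finset.sum_congr rfl fun j _ => ?_
    rw [map_smul, lTranslate_single, faceN_translate]

/-- The chain homotopy identity in positive degrees. -/
lemma bnd_prism (t : G) (q : ℕ) (z : (Fin (q + 2) → G) →₀ ℤ) :
    bnd (q + 1) (prism t (q + 1) z) + prism t q (bnd q z) =
      lTranslate t (q + 1) z - z := by
  induction z using Finsupp.induction_linear with
  | zero => simp
  | add f f' hf hf' =>
    simp only [map_add]
    rw [add_add_add_comm, hf, hf']
    abel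
  | single σ b =>
    have hb : Finsupp.single σ b = b • Finsupp.single σ (1 : ℤ) := by
      rw [Finsupp.smul_single', mul_one]
    rw [hb]
    simp only [map_smul]
    rw [← smul_add, bnd_prism_single, smul_sub]

/-- The chain homotopy identity in degree zero. -/
lemma bnd_prism_zero (t : G) (z : (Fin 1 → G) →₀ ℤ) :
    bnd 0 (prism t 0 z) = lTranslate t 0 z - z := by
  induction z using Finsupp.induction_linear with
  | zero => simp
  | add f f' hf hf' =>
    simp only [map_add]
    rw [hf, hf']
    abel
  | single σ b =>
    have hb : Finsupp.single σ b = b • Finsupp.single σ (1 : ℤ) := by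
      rw [Finsupp.smul_single', mul_one]
    rw [hb]
    simp only [map_smul]
    congr 1
    rw [prism_single, one_smul, Finset.sum_range_one, pow_zero, one_smul,
      bnd_single, one_smul, lTranslate_single]
    rw [show (0:ℕ) + 2 = 2 from rfl]
    rw [Finset.sum_range_succ, Finset.sum_range_one]
    have e0 : faceN 0 (prismN t 0 σ 0) 0 = fun r : Fin 1 => t * σ r := by
      funext r
      have hr : r = 0 := Fin.ext (by omega)
      subst hr
      simp [faceN, prismN]
    have e1 : faceN 0 (prismN t 0 σ 0) 1 = σ := by
      funext r
      have hr : r = 0 := Fin.ext (by omega)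
      subst hr
      simp [faceN, prismN]
    rw [e0, e1]
    simp [sub_eq_add_neg]

end Homotopy

section VR

variable {G : Type*} [Group G]

lemma VRChain_mono {X : Finset G} {S : Set G} {q k k' : ℕ} (h : k ≤ k')
    {c : (Fin (q + 1) → G) →₀ ℤ} (hc : VRChain X S q k c) : VRChain X S q k' c :=
  fun σ hσ => ⟨(hc σ hσ).1, fun i j => le_trans ((hc σ hσ).2 i j) h⟩

lemma VRChain_univ {X : Finset G} {S : Set G} {q k : ℕ}
    {c : (Fin (q + 1) → G) →₀ ℤ} (hc : VRChain X S q k c) : VRChain X Set.univ q k c :=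
  fun σ hσ => ⟨fun _ => trivial, (hc σ hσ).2⟩

lemma VRChain_sub {X : Finset G} {S : Set G} {q k : ℕ}
    {c₁ c₂ : (Fin (q + 1) → G) →₀ ℤ} (h1 : VRChain X S q k c₁) (h2 : VRChain X S q k c₂) :
    VRChain X S q k (c₁ - c₂) := by
  classical
  intro σ hσ
  have : σ ∈ c₁.support ∪ c₂.support := by
    have hsub := Finsupp.support_sub (f := c₁) (g := c₂)
    exact hsub hσ
  rcases Finset.mem_union.1 this with h | h
  exacts [h1 σ h, h2 σ h]

lemma VRChain_finsum {X : Finset G} {S : Set G} {q k : ℕ} {ι : Type*} (s : Finset ι)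
    (f : ι → ((Fin (q + 1) → G) →₀ ℤ)) (hf : ∀ i ∈ s, VRChain X S q k (f i)) :
    VRChain X S q k (∑ i ∈ s, f i) := by
  classical
  induction s using Finset.induction_on with
  | empty => intro σ hσ; simp at hσ
  | insert a s' hni ih =>
    rw [Finset.sum_insert hni]
    intro σ hσ
    have := Finsupp.support_add hσ
    rcases Finset.mem_union.1 this with h | h
    · exact hf a (Finset.mem_insert_self a s') σ h
    · exact ih (fun i hi => hf i (Finset.mem_insert_of_mem hi)) σ h

lemma support_lTranslate (g : G) (q : ℕ) (c : (Fin (q + 1) → G) →₀ ℤ) :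
    ∀ τ ∈ (lTranslate g q c).support, ∃ σ ∈ c.support, τ = fun i => g * σ i := by
  classical
  intro τ hτ
  rw [lTranslate, Finsupp.lmapDomain_apply] at hτ
  have := Finsupp.mapDomain_support hτ
  obtain ⟨σ, hσ, rfl⟩ := Finset.mem_image.1 this
  exact ⟨σ, hσ, rfl⟩

lemma VRChain_lTranslate {X : Finset G} {S S' : Set G} {q k : ℕ} (g : G)
    {c : (Fin (q + 1) → G) →₀ ℤ} (hc : VRChain X S q k c)
    (hS : ∀ σ ∈ c.support, ∀ i, g * σ i ∈ S') :
    VRChain X S' q k (lTranslate g q c) := by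
  intro τ hτ
  obtain ⟨σ, hσ, rfl⟩ := support_lTranslate g q c τ hτ
  refine ⟨fun i => hS σ hσ i, fun i j => ?_⟩
  rw [wordDist_left_invariant]
  exact (hc σ hσ).2 i j

lemma support_prism (t : G) (n : ℕ) (c : (Fin (n + 1) → G) →₀ ℤ) :
    ∀ τ ∈ (prism t n c).support, ∃ σ ∈ c.support, ∃ i : ℕ, i ≤ n ∧ τ = prismN t n σ i := by
  classical
  intro τ hτ
  rw [prism, Finsupp.lift_apply] at hτ
  have h1 := Finsupp.support_sum hτ
  obtain ⟨σ, hσ, h2⟩ := Finset.mem_biUnion.1 h1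
  have h3 := Finsupp.support_smul h2
  have h4 := Finsupp.support_finset_sum h3
  obtain ⟨i, _, h5⟩ := Finset.mem_biUnion.1 h4
  have h6 := Finsupp.support_smul h5
  have h7 := Finsupp.support_single_subset h6
  rw [Finset.mem_singleton] at h7
  exact ⟨σ, hσ, (i : ℕ), by omega, h7⟩

lemma VRChain_prism (X : Finset G) (hX : Subgroup.closure (X : Set G) = ⊤)
    {t : G} (htc : ∀ g : G, t * g = g * t) {S : Set G} (hS : ∀ g ∈ S, t * g ∈ S)
    {n k : ℕ} {c : (Fin (n + 1) → G) →₀ ℤ} (hc : VRChain X S n k c) :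
    VRChain X S (n + 1) (k + (wordLength X t + wordLength X t⁻¹)) (prism t n c) := by
  intro τ hτ
  obtain ⟨σ, hσ, i, hi, rfl⟩ := support_prism t n c τ hτ
  obtain ⟨hmem, hdist⟩ := hc σ hσ
  constructor
  · intro r
    simp only [prismN]
    split_ifs
    · exact hmem _
    · exact hS _ (hmem _)
  · intro r s
    simp only [prismN]
    split_ifs
    · exact le_trans (hdist _ _) (by omega)
    · exact le_trans (wordDist_mul_right_le X hX htc _ _)
        (by have := hdist ⟨min (r : ℕ) n, by omega⟩ ⟨(s : ℕ) - 1, by have := s.2; omega⟩; omega)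
    · exact le_trans (wordDist_mul_left_le X hX htc _ _)
        (by have := hdist ⟨(r : ℕ) - 1, by have := r.2; omega⟩ ⟨min (s : ℕ) n, by omega⟩; omega)
    · rw [wordDist_left_invariant]
      exact le_trans (hdist _ _) (by omega)

end VR

section Char

variable {G : Type*} [Group G]

lemma char_one {χ : G → ℝ} (hχ : IsCharacter χ) : χ 1 = 0 := by
  have := hχ 1 1
  simp at this
  linarith

lemma char_inv {χ : G → ℝ} (hχ : IsCharacter χ) (g : G) : χ g⁻¹ = -χ g := by
  have := hχ g g⁻¹
  simp [char_one hχ] at this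
  linarith

lemma char_pow {χ : G → ℝ} (hχ : IsCharacter χ) (t : G) (n : ℕ) :
    χ (t ^ n) = n * χ t := by
  induction n with
  | zero => simp [char_one hχ]
  | succ n ih =>
    rw [pow_succ, hχ, ih]
    push_cast
    ring

lemma exists_translation {χ : G → ℝ} (hχ : IsCharacter χ) {t : G} (ht : 0 < χ t)
    {r : ℕ} (c : (Fin r → G) →₀ ℤ) [NeZero r] :
    ∃ N : ℕ, ∀ σ ∈ c.support, ∀ i : Fin r, 0 ≤ χ (t ^ N * σ i) := by
  classical
  obtain ⟨B, hB⟩ : ∃ B : ℝ, ∀ σ ∈ c.support, ∀ i, B ≤ χ (σ i) := by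
    refine ⟨(insert (0:ℝ) (c.support.biUnion fun σ =>
      Finset.image (fun i => χ (σ i)) Finset.univ)).min' (by simp), fun σ hσ i => ?_⟩
    apply Finset.min'_le
    refine Finset.mem_insert_of_mem (Finset.mem_biUnion.2 ⟨σ, hσ, ?_⟩)
    exact Finset.mem_image.2 ⟨i, Finset.mem_univ i, rfl⟩
  obtain ⟨N, hN⟩ := exists_nat_ge (-B / χ t)
  refine ⟨N, fun σ hσ i => ?_⟩
  have h1 : χ (t ^ N * σ i) = N * χ t + χ (σ i) := by rw [hχ, char_pow hχ]
  have h4 : -B ≤ N * χ t := by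
    rw [div_le_iff₀ ht] at hN
    linarith
  have h2 := hB σ hσ i
  rw [h1]
  linarith

end Char

section Key

variable {G : Type*} [Group G]

/-- The key filling construction: translate a filling of `z` far into `G_χ` and connect
with prisms over the translates of `z`. -/
lemma key_filling (X : Finset G) (hX : Subgroup.closure (X : Set G) = ⊤)
    {t : G} (htc : ∀ g : G, t * g = g * t)
    {χ : G → ℝ} (hχ : IsCharacter χ) (ht : 0 < χ t)
    (p k l : ℕ)
    (z : (Fin (p + 1) → G) →₀ ℤ)
    (hzS : VRChain X {g : G | 0 ≤ χ g} p k z)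
    (hpr : ∀ j : ℕ, bnd p (prism t p (lTranslate (t ^ j) p z)) =
      lTranslate (t ^ (j + 1)) p z - lTranslate (t ^ j) p z)
    (c : (Fin (p + 2) → G) →₀ ℤ) (hc : VRChain X Set.univ (p + 1) l c)
    (hbc : bnd p c = z) :
    ∃ c' : (Fin (p + 2) → G) →₀ ℤ,
      VRChain X {g : G | 0 ≤ χ g} (p + 1)
        (max l (k + (wordLength X t + wordLength X t⁻¹))) c' ∧ bnd p c' = z := by
  obtain ⟨N, hN⟩ := exists_translation hχ ht c
  refine ⟨lTranslate (t ^ N) (p + 1) c -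
    ∑ j ∈ Finset.range N, prism t p (lTranslate (t ^ j) p z), ?_, ?_⟩
  · apply VRChain_sub
    · refine VRChain_mono (le_max_left _ _) (VRChain_lTranslate (t ^ N) hc ?_)
      intro σ hσ i
      exact hN σ hσ i
    · refine VRChain_finsum _ _ fun j _ => ?_
      refine VRChain_mono (le_max_right _ _) ?_
      refine VRChain_prism X hX htc ?_ (VRChain_lTranslate (t ^ j) hzS ?_)
      · intro g hg
        have : χ (t * g) = χ t + χ g := hχ t g
        simp only [Set.mem_setOf_eq] at hg ⊢
        linarith
      · intro σ hσ i
        have h1 : χ (t ^ j * σ i) = j * χ t + χ (σ i) := by rw [hχ, char_pow hχ]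
        have h2 : (0:ℝ) ≤ χ (σ i) := (hzS σ hσ).1 i
        simp only [Set.mem_setOf_eq]
        rw [h1]
        positivity
  · rw [map_sub, map_sum, bnd_lTranslate, hbc]
    have h1 : ∑ j ∈ Finset.range N, bnd p (prism t p (lTranslate (t ^ j) p z)) =
        ∑ j ∈ Finset.range N,
          (lTranslate (t ^ (j + 1)) p z - lTranslate (t ^ j) p z) :=
      Finset.sum_congr rfl fun j _ => hpr j
    rw [h1, Finset.sum_range_sub (fun j => lTranslate (t ^ j) p z), pow_zero, lTranslate_one]
    abel

end Key

/-- If `G` is of type `FP_m` and the character `χ` does not vanish on the center of `G`,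
then `χ ∈ Σ^m(G;ℤ)`. -/
theorem stmt3 {G : Type*} [Group G] (X : Finset G)
    (hX : Subgroup.closure (X : Set G) = ⊤) (m : ℕ)
    (hFP : TypeFP X Set.univ m)
    (χ : G → ℝ) (hχ : IsCharacter χ)
    (hZ : ∃ z ∈ Subgroup.center G, χ z ≠ 0) :
    TypeFP X {g : G | 0 ≤ χ g} m := by
  classical
  obtain ⟨z₀, hz₀c, hz₀⟩ := hZ
  obtain ⟨t, htc, ht⟩ : ∃ t : G, (∀ g : G, t * g = g * t) ∧ 0 < χ t := by
    rcases lt_or_gt_of_ne hz₀ with h | h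
    · refine ⟨z₀⁻¹, fun g => ?_, by rw [char_inv hχ]; linarith⟩
      exact (Subgroup.mem_center_iff.1 ((Subgroup.center G).inv_mem hz₀c) g).symm
    · exact ⟨z₀, fun g => (Subgroup.mem_center_iff.1 hz₀c g).symm, h⟩
  intro q hq k
  obtain ⟨l, hlk, hl⟩ := hFP q hq k
  refine ⟨max l (k + (wordLength X t + wordLength X t⁻¹)),
    le_trans hlk (le_max_left _ _), ?_⟩
  cases q with
  | zero =>
    intro z hz haug
    obtain ⟨c, hc, hbc⟩ := hl z (VRChain_univ hz) haug
    have hpr : ∀ j : ℕ, bnd 0 (prism t 0 (lTranslate (t ^ j) 0 z)) =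
        lTranslate (t ^ (j + 1)) 0 z - lTranslate (t ^ j) 0 z := by
      intro j
      rw [bnd_prism_zero, lTranslate_comp, ← pow_succ']
    exact key_filling X hX htc hχ ht 0 k l z hz hpr c hc hbc
  | succ q' =>
    intro z hz hcyc
    obtain ⟨c, hc, hbc⟩ := hl z (VRChain_univ hz) hcyc
    have hpr : ∀ j : ℕ, bnd (q' + 1) (prism t (q' + 1) (lTranslate (t ^ j) (q' + 1) z)) =
        lTranslate (t ^ (j + 1)) (q' + 1) z - lTranslate (t ^ j) (q' + 1) z := by
      intro j
      have h := bnd_prism t q' (lTranslate (t ^ j) (q' + 1) z)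
      rw [bnd_lTranslate, hcyc, map_zero, map_zero, add_zero, lTranslate_comp,
        ← pow_succ'] at h
      exact h
    exact key_filling X hX htc hχ ht (q' + 1) k l z hz hpr c hc hbc
end

section
/- Let 1 → N → G →^π Q → 1 be a short exact sequence of countable groups with N abelian (N identified with its image in G). Then the following are equivalent: (i) there exists a transversal t : Q → G (a map with π∘t = id_Q) which is coarsely Lipschitz; (ii) there exist a group homomorphism α : Q → Aut(N) and a coarse equivalence φ : N ⋊_α Q → G (a map of sets, not necessarily a homomorphism) such that φ(n, 1_Q) = n for all n ∈ N and π(φ(n,x)) = x for all (n,x) ∈ N ⋊_α Q. -/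
/-- `f` is coarsely Lipschitz (finite-subset version for countable groups). -/
def CoarselyLipschitz {A B : Type*} [Group A] [Group B] (f : A → B) : Prop :=
  ∀ F : Finset A, {b : B | ∃ a a' : A, a⁻¹ * a' ∈ F ∧ b = (f a)⁻¹ * f a'}.Finite

/-- `f` is coarsely injective. -/
def CoarselyInjective {A B : Type*} [Group A] [Group B] (f : A → B) : Prop :=
  ∀ F' : Finset B, {c : A | ∃ a a' : A, (f a)⁻¹ * f a' ∈ F' ∧ c = a⁻¹ * a'}.Finite

/-- `f` is coarsely surjective. -/
def CoarselySurjective {A B : Type*} [Group A] [Group B] (f : A → B) : Prop :=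
  ∃ F' : Finset B, ∀ b : B, ∃ a : A, ∃ b' ∈ F', b = f a * b'

/-- `f` is a coarse equivalence. -/
def CoarseEquivalence {A B : Type*} [Group A] [Group B] (f : A → B) : Prop :=
  CoarselyLipschitz f ∧ CoarselyInjective f ∧ CoarselySurjective f

open Pointwise

/-- For a short exact sequence `1 → N → G → Q → 1` of countable groups with `N` abelian,
a coarsely Lipschitz transversal exists iff there is a coarse equivalence
`N ⋊ Q → G` compatible with the sequence. -/
theorem stmt7 {G Q : Type*} [Group G] [Group Q] [Countable G] [Countable Q]
    (N : Subgroup G) [N.Normal]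
    (hab : ∀ a b : N, a * b = b * a)
    (π : G →* Q) (hsurj : Function.Surjective π) (hker : π.ker = N) :
    (∃ t : Q → G, (∀ q, π (t q) = q) ∧ CoarselyLipschitz t) ↔
    (∃ (α : Q →* MulAut N) (φ : N ⋊[α] Q → G),
      CoarseEquivalence φ ∧ (∀ n : N, φ ⟨n, 1⟩ = (n : G)) ∧
      (∀ p : N ⋊[α] Q, π (φ p) = p.right)) := by
  classical
  have hmemN : ∀ g : G, π g = 1 → g ∈ N := fun g h => hker ▸ MonoidHom.mem_ker.mpr h
  have hNone : ∀ g : G, g ∈ N → π g = 1 := fun g h =>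
    MonoidHom.mem_ker.mp (hker ▸ h : g ∈ π.ker)
  constructor
  · rintro ⟨t0, ht0π, ht0L⟩
    -- normalize t so that t 1 = 1
    obtain ⟨t, htπ, ht1, htL⟩ :
        ∃ t : Q → G, (∀ q, π (t q) = q) ∧ t 1 = 1 ∧ CoarselyLipschitz t := by
      refine ⟨fun q => t0 q * (t0 1)⁻¹, fun q => by simp [ht0π], by simp, ?_⟩
      intro F
      refine ((ht0L F).image (fun g => t0 1 * g * (t0 1)⁻¹)).subset ?_
      rintro b ⟨a, a', hF, rfl⟩
      refine ⟨(t0 a)⁻¹ * t0 a', ⟨a, a', hF, rfl⟩, ?_⟩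
      simp only [mul_inv_rev, inv_inv]
      group
    have hcomm : ∀ c n : G, c ∈ N → n ∈ N → c * n = n * c := by
      intro c n hc hn
      simpa using congrArg Subtype.val (hab ⟨c, hc⟩ ⟨n, hn⟩)
    have hmul : ∀ x y : Q, (MulAut.conjNormal (t (x*y)) : MulAut N)
        = MulAut.conjNormal (t x) * MulAut.conjNormal (t y) := by
      intro x y
      ext n
      show t (x*y) * (n : G) * (t (x*y))⁻¹ = t x * (t y * (n : G) * (t y)⁻¹) * (t x)⁻¹
      have hc : (t (x*y))⁻¹ * (t x * t y) ∈ N := hmemN _ (by simp only [map_mul, map_inv, htπ]; group)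
      have hty : t x * t y = t (x*y) * ((t (x*y))⁻¹ * (t x * t y)) := by group
      have hcn : ((t (x*y))⁻¹ * (t x * t y)) * (n : G) * ((t (x*y))⁻¹ * (t x * t y))⁻¹
          = (n : G) := by
        rw [hcomm _ _ hc n.2]; group
      calc t (x*y) * (n : G) * (t (x*y))⁻¹
          = t (x*y) * (((t (x*y))⁻¹ * (t x * t y)) * (n : G)
              * ((t (x*y))⁻¹ * (t x * t y))⁻¹) * (t (x*y))⁻¹ := by rw [hcn]
        _ = (t (x*y) * ((t (x*y))⁻¹ * (t x * t y))) * (n : G)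
              * (t (x*y) * ((t (x*y))⁻¹ * (t x * t y)))⁻¹ := by group
        _ = (t x * t y) * (n : G) * (t x * t y)⁻¹ := by rw [← hty]
        _ = t x * (t y * (n : G) * (t y)⁻¹) * (t x)⁻¹ := by group
    set α : Q →* MulAut N :=
      { toFun := fun q => MulAut.conjNormal (t q)
        map_one' := by ext n; simp [ht1]
        map_mul' := hmul } with hαdef
    have hαcoe : ∀ (x : Q) (k : N), ((α x k : N) : G) = t x * (k : G) * (t x)⁻¹ := by
      intro x k; rfl
    set φ : N ⋊[α] Q → G := fun p => (p.left : G) * t p.right with hφdef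
    have key : ∀ p f : N ⋊[α] Q,
        (φ p)⁻¹ * φ (p * f) = (f.left : G) * ((t p.right)⁻¹ * t (p.right * f.right)) := by
      intro p f
      simp only [hφdef, SemidirectProduct.mul_left, SemidirectProduct.mul_right,
        Subgroup.coe_mul, hαcoe, mul_inv_rev]
      group
    have hπφ : ∀ p : N ⋊[α] Q, π (φ p) = p.right := by
      intro p
      simp [hφdef, htπ, hNone _ p.left.2]
    refine ⟨α, φ, ⟨?_, ?_, ?_⟩, ?_, hπφ⟩
    · -- coarsely Lipschitz
      intro F
      have hM : ((fun f : N ⋊[α] Q => (f.left : G)) '' ↑F).Finite :=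
        F.finite_toSet.image _
      have hT := htL (F.image SemidirectProduct.right)
      refine (hM.mul hT).subset ?_
      rintro b ⟨p, p', hF, rfl⟩
      have hp' : p' = p * (p⁻¹ * p') := by group
      rw [hp', key]
      refine Set.mul_mem_mul ⟨p⁻¹ * p', hF, rfl⟩ ⟨p.right, p.right * (p⁻¹ * p').right, ?_, rfl⟩
      simpa using Finset.mem_image_of_mem SemidirectProduct.right hF
    · -- coarsely injective
      intro F'
      have hT := htL (F'.image π)
      set ψ : N ⋊[α] Q → G × Q := fun p => ((p.left : G), p.right) with hψdef
      have hψinj : Function.Injective ψ := by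
        intro p q h
        obtain ⟨h1, h2⟩ := Prod.mk.injEq .. ▸ h
        exact SemidirectProduct.ext (Subtype.ext h1) h2
      have hK : ((↑F' * {b : G | ∃ a a' : Q, a⁻¹ * a' ∈ F'.image π ∧ b = (t a)⁻¹ * t a'}⁻¹)
          ×ˢ (↑(F'.image π) : Set Q)).Finite :=
        (F'.finite_toSet.mul hT.inv).prod (F'.image π).finite_toSet
      refine ((hK.preimage (hψinj.injOn)).subset ?_)
      rintro c ⟨p, p', hF', rfl⟩
      have hp' : p' = p * (p⁻¹ * p') := by group
      set f := p⁻¹ * p' with hf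
      have hg : (φ p)⁻¹ * φ p' = (f.left : G) * ((t p.right)⁻¹ * t (p.right * f.right)) := by
        rw [hp', key]
      have hfr : f.right = π ((φ p)⁻¹ * φ p') := by
        rw [map_mul, map_inv, hπφ, hπφ, hf]; rfl
      have hfrF : f.right ∈ F'.image π := by
        rw [hfr]; exact Finset.mem_image_of_mem π hF'
      refine Set.mem_preimage.mpr (Set.mem_prod.mpr ⟨?_, ?_⟩)
      · -- first coordinate
        show (f.left : G) ∈
          ↑F' * ({b : G | ∃ a a' : Q, a⁻¹ * a' ∈ F'.image π ∧ b = (t a)⁻¹ * t a'})⁻¹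
        have : (f.left : G) = ((φ p)⁻¹ * φ p') * ((t p.right)⁻¹ * t (p.right * f.right))⁻¹ := by
          rw [hg]; group
        rw [this]
        exact Set.mul_mem_mul hF' (Set.inv_mem_inv.mpr
          ⟨p.right, p.right * f.right, by simpa using hfrF, rfl⟩)
      · exact hfrF
    · -- coarsely surjective
      refine ⟨{1}, fun g => ?_⟩
      have hn : g * (t (π g))⁻¹ ∈ N := hmemN _ (by simp [htπ])
      exact ⟨⟨⟨g * (t (π g))⁻¹, hn⟩, π g⟩, 1, Finset.mem_singleton_self 1, by
        simp [hφdef]⟩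
    · intro n
      simp [hφdef, ht1]
  · rintro ⟨α, φ, ⟨hL, _, _⟩, hφ1, hφπ⟩
    refine ⟨fun q => φ ⟨1, q⟩, fun q => by rw [hφπ], ?_⟩
    intro F
    refine (hL (F.image (fun y => (⟨1, y⟩ : N ⋊[α] Q)))).subset ?_
    rintro b ⟨a, a', hF, rfl⟩
    refine ⟨⟨1, a⟩, ⟨1, a'⟩, ?_, rfl⟩
    have : (⟨1, a⟩ : N ⋊[α] Q)⁻¹ * ⟨1, a'⟩ = ⟨1, a⁻¹ * a'⟩ := by
      apply SemidirectProduct.ext <;>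
        simp [SemidirectProduct.mul_left, SemidirectProduct.mul_right,
          SemidirectProduct.inv_left, SemidirectProduct.inv_right]
    rw [this]
    exact Finset.mem_image_of_mem _ hF
end
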